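/- arXiv:q-bio/0505055 — 4 statements merged into one kernel-verified Lean document; each statement's English description precedes it below -/
import Mathlib

section
/- Let q_α, q_β, q_γ be real numbers, K = q_α + q_β + q_γ, and let R be the matrix of K3ST form with parameters (−K, q_α, q_β, q_γ). Then H₂⁻¹ R H₂ is the diagonal matrix −2·diag(0, q_α + q_γ, q_β + q_γ, q_α + q_β). -/
set_option maxHeartbeats 1000000

/-- A 4×4 real matrix of K3ST form with parameters `(a, b, c, d)`. -/
def K3ST (a b c d : ℝ) : Matrix (Fin 4) (Fin 4) ℝ :=
  !![a, b, c, d;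
     b, a, d, c;
     c, d, a, b;
     d, c, b, a]

/-- The 4×4 Hadamard matrix `H₂`. -/
def H2 : Matrix (Fin 4) (Fin 4) ℝ :=
  !![1,  1,  1,  1;
     1, -1,  1, -1;
     1,  1, -1, -1;
     1, -1, -1,  1]

lemma H2_inv : H2⁻¹ = (1/4 : ℝ) • H2 := by
  apply Matrix.inv_eq_right_inv
  show H2 * ((1/4 : ℝ) • H2) = 1
  rw [Matrix.mul_smul]
  ext i j
  fin_cases i <;> fin_cases j <;>
    simp [H2, Matrix.mul_apply, Fin.sum_univ_four, Matrix.one_apply, Matrix.vecHead, Matrix.vecTail] <;> norm_num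

theorem stmt2 (qα qβ qγ : ℝ) :
    H2⁻¹ * K3ST (-(qα + qβ + qγ)) qα qβ qγ * H2 =
      (-2 : ℝ) • Matrix.diagonal ![0, qα + qγ, qβ + qγ, qα + qβ] := by
  rw [H2_inv]
  ext i j
  fin_cases i <;> fin_cases j <;>
    simp [H2, K3ST, Matrix.mul_apply, Fin.sum_univ_four, Matrix.smul_apply, Matrix.diagonal_apply, Matrix.vecHead, Matrix.vecTail] <;> ring
end

section
/- Let q_α, q_β, q_γ be real numbers, K = q_α + q_β + q_γ, and let R be the matrix of K3ST form with parameters (−K, q_α, q_β, q_γ). Then the matrix exponential exp(R) is of K3ST form with parameters (p_ε, p_α, p_β, p_γ) where p_α = (1/4)(1 − e^{−2(q_α+q_γ)} + e^{−2(q_β+q_γ)} − e^{−2(q_α+q_β)}), p_β = (1/4)(1 + e^{−2(q_α+q_γ)} − e^{−2(q_β+q_γ)} − e^{−2(q_α+q_β)}), p_γ = (1/4)(1 − e^{−2(q_α+q_γ)} − e^{−2(q_β+q_γ)} + e^{−2(q_α+q_β)}), and p_ε = 1 − p_α − p_β − p_γ. In particular 1 − 2(p_α + p_γ) = e^{−2(q_α+q_γ)},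 1 − 2(p_β + p_γ) = e^{−2(q_β+q_γ)}, and 1 − 2(p_α + p_β) = e^{−2(q_α+q_β)}. -/
private noncomputable def Hmat : Matrix (Fin 4) (Fin 4) ℝ :=
  !![1, 1, 1, 1;
     1, 1, -1, -1;
     1, -1, 1, -1;
     1, -1, -1, 1]

private noncomputable def Hinvmat : Matrix (Fin 4) (Fin 4) ℝ :=
  !![1/4, 1/4, 1/4, 1/4;
     1/4, 1/4, -(1/4), -(1/4);
     1/4, -(1/4), 1/4, -(1/4);
     1/4, -(1/4), -(1/4), 1/4]

private lemma Hmat_mul_smul : Hmat * Hinvmat = 1 := by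
  ext i j
  fin_cases i <;> fin_cases j <;>
    simp [Hmat, Hinvmat, Matrix.mul_apply, Fin.sum_univ_four, Matrix.one_apply, Matrix.vecHead, Matrix.vecTail] <;> norm_num

private lemma Hmat_inv : Hmat⁻¹ = Hinvmat :=
  Matrix.inv_eq_right_inv Hmat_mul_smul

private lemma Hmat_isUnit : IsUnit Hmat :=
  (Matrix.isUnit_iff_isUnit_det _).mpr (Matrix.isUnit_det_of_right_inverse Hmat_mul_smul)

private lemma diag4 (v : Fin 4 → ℝ) :
    Matrix.diagonal v = !![v 0, 0, 0, 0; 0, v 1, 0, 0; 0, 0, v 2, 0; 0, 0, 0, v 3] := by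
  ext i j
  fin_cases i <;> fin_cases j <;> rfl

set_option maxHeartbeats 2000000 in
theorem stmt3 (qα qβ qγ : ℝ) :
    let pα : ℝ := (1 / 4) * (1 - Real.exp (-2 * (qα + qγ)) + Real.exp (-2 * (qβ + qγ))
      - Real.exp (-2 * (qα + qβ)))
    let pβ : ℝ := (1 / 4) * (1 + Real.exp (-2 * (qα + qγ)) - Real.exp (-2 * (qβ + qγ))
      - Real.exp (-2 * (qα + qβ)))
    let pγ : ℝ := (1 / 4) * (1 - Real.exp (-2 * (qα + qγ)) - Real.exp (-2 * (qβ + qγ))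
      + Real.exp (-2 * (qα + qβ)))
    let pε : ℝ := 1 - pα - pβ - pγ
    NormedSpace.exp (K3ST (-(qα + qβ + qγ)) qα qβ qγ) = K3ST pε pα pβ pγ ∧
      1 - 2 * (pα + pγ) = Real.exp (-2 * (qα + qγ)) ∧
      1 - 2 * (pβ + pγ) = Real.exp (-2 * (qβ + qγ)) ∧
      1 - 2 * (pα + pβ) = Real.exp (-2 * (qα + qβ)) := by
  intro pα pβ pγ pε
  refine ⟨?_, by simp only [pα, pβ, pγ]; ring, by simp only [pα, pβ, pγ]; ring,
    by simp only [pα, pβ, pγ]; ring⟩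
  set d : Fin 4 → ℝ := ![0, -2*(qβ+qγ), -2*(qα+qγ), -2*(qα+qβ)] with hd
  have hR : K3ST (-(qα + qβ + qγ)) qα qβ qγ = Hmat * Matrix.diagonal d * Hmat⁻¹ := by
    rw [Hmat_inv, diag4]
    ext i j
    fin_cases i <;> fin_cases j <;>
      simp [Hmat, Hinvmat, K3ST, hd, Matrix.mul_apply, Fin.sum_univ_four, Matrix.vecHead, Matrix.vecTail] <;> ring
  rw [hR, Matrix.exp_conj _ _ Hmat_isUnit, Matrix.exp_diagonal, Hmat_inv]
  have hexp : NormedSpace.exp d = ![1, Real.exp (-2*(qβ+qγ)), Real.exp (-2*(qα+qγ)),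
      Real.exp (-2*(qα+qβ))] := by
    rw [Pi.exp_def, ← Real.exp_eq_exp_ℝ]
    funext i
    fin_cases i <;> simp [hd]
  rw [hexp, diag4]
  ext i j
  fin_cases i <;> fin_cases j <;>
    simp [Hmat, Hinvmat, K3ST, pα, pβ, pγ, pε, Matrix.mul_apply, Fin.sum_univ_four,
      Matrix.vecHead, Matrix.vecTail] <;> ring
end

section
/- Let W be a finite index set and for each e ∈ W let M_e be a 4×4 real matrix of K3ST form with parameters (a_e, b_e, c_e, d_e). Then the product M_W = ∏_{e∈W} M_e (well-defined since K3ST-form matrices commute) is again of K3ST form, with parameters (A,B,C,D) satisfying the four spectral identities: A+B+C+D = ∏_{e∈W}(a_e+b_e+c_e+d_e), A−B+C−D = ∏_{e∈W}(a_e−b_e+c_e−d_e), A+B−C−D = ∏_{e∈W}(a_e+b_e−c_e−d_e), and A−B−C+D = ∏_{e∈W}(a_e−b_e−c_e+d_e). -/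
lemma K3ST_mul (a b c d a' b' c' d' : ℝ) :
    K3ST a b c d * K3ST a' b' c' d' =
      K3ST (a*a' + b*b' + c*c' + d*d') (a*b' + b*a' + c*d' + d*c')
        (a*c' + b*d' + c*a' + d*b') (a*d' + b*c' + c*b' + d*a') := by
  ext i j
  fin_cases i <;> fin_cases j <;>
    simp [K3ST, Matrix.mul_apply, Fin.sum_univ_four] <;> ring

lemma K3ST_one : (1 : Matrix (Fin 4) (Fin 4) ℝ) = K3ST 1 0 0 0 := by
  ext i j
  fin_cases i <;> fin_cases j <;> simp [K3ST, Matrix.one_apply, Matrix.vecHead, Matrix.vecTail]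

theorem stmt6 {ι : Type*} (W : Finset ι) (M : ι → Matrix (Fin 4) (Fin 4) ℝ)
    (a b c d : ι → ℝ) (hM : ∀ e ∈ W, M e = K3ST (a e) (b e) (c e) (d e))
    (hcomm : (W : Set ι).Pairwise fun e f => Commute (M e) (M f)) :
    ∃ A B C D : ℝ,
      W.noncommProd M hcomm = K3ST A B C D ∧
      A + B + C + D = ∏ e ∈ W, (a e + b e + c e + d e) ∧
      A - B + C - D = ∏ e ∈ W, (a e - b e + c e - d e) ∧
      A + B - C - D = ∏ e ∈ W, (a e + b e - c e - d e) ∧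
      A - B - C + D = ∏ e ∈ W, (a e - b e - c e + d e) := by
  classical
  induction W using Finset.cons_induction with
  | empty =>
    exact ⟨1, 0, 0, 0, by simpa using K3ST_one, by simp, by simp, by simp, by simp⟩
  | cons e s he ih =>
    have hsub : (s : Set ι) ⊆ (Finset.cons e s he : Finset ι) := by
      intro x hx; simp_all
    obtain ⟨A, B, C, D, hP, h1, h2, h3, h4⟩ :=
      ih (fun f hf => hM f (by simp [hf])) (hcomm.mono hsub)
    rw [Finset.noncommProd_cons, hP, hM e (by simp), K3ST_mul]
    refine ⟨_, _, _, _, rfl, ?_, ?_, ?_, ?_⟩ <;>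
      simp only [Finset.prod_cons, ← h1, ← h2, ← h3, ← h4] <;> ring
end

section
/- Let G = ℤ₂ × ℤ₂ with elements labeled ε = (0,0), α = (1,0), β = (0,1), γ = (1,1), and let p_U, p_V, p_W : G → ℝ be arbitrary functions. For subsets X, Y ⊆ G define Pr[X;Y] = Σ over triples (θ,φ,ψ) ∈ G³ with θ+ψ ∈ X and φ+ψ ∈ Y of p_U(θ)·p_V(φ)·p_W(ψ). Then (p_U(ε)+p_U(α)−p_U(β)−p_U(γ)) · (p_V(ε)−p_V(α)+p_V(β)−p_V(γ)) · (p_W(ε)−p_W(α)−p_W(β)+p_W(γ)) = Pr[{ε,α};{ε,β}] + Pr[{β,γ};{α,γ}] − Pr[{ε,α};{α,γ}] − Pr[{β,γ};{ε,β}]. -/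
/-- `kleinPr pU pV pW X Y` is the sum, over triples `(θ,φ,ψ)` of Klein-group elements
with `θ+ψ ∈ X` and `φ+ψ ∈ Y`, of `pU θ * pV φ * pW ψ`. -/
def kleinPr (pU pV pW : ZMod 2 × ZMod 2 → ℝ) (X Y : Finset (ZMod 2 × ZMod 2)) : ℝ :=
  ∑ t ∈ (Finset.univ : Finset ((ZMod 2 × ZMod 2) × (ZMod 2 × ZMod 2) × (ZMod 2 × ZMod 2))).filter
      (fun t => t.1 + t.2.2 ∈ X ∧ t.2.1 + t.2.2 ∈ Y),
    pU t.1 * pV t.2.1 * pW t.2.2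

lemma sum_zmod2 {M : Type*} [AddCommMonoid M] (f : ZMod 2 → M) :
    ∑ x : ZMod 2, f x = f 0 + f 1 := Fin.sum_univ_two f

set_option maxHeartbeats 4000000 in
theorem stmt15 (pU pV pW : ZMod 2 × ZMod 2 → ℝ) :
    (pU (0, 0) + pU (1, 0) - pU (0, 1) - pU (1, 1)) *
      (pV (0, 0) - pV (1, 0) + pV (0, 1) - pV (1, 1)) *
      (pW (0, 0) - pW (1, 0) - pW (0, 1) + pW (1, 1)) =
    kleinPr pU pV pW {(0, 0), (1, 0)} {(0, 0), (0, 1)} +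
      kleinPr pU pV pW {(0, 1), (1, 1)} {(1, 0), (1, 1)} -
      kleinPr pU pV pW {(0, 0), (1, 0)} {(1, 0), (1, 1)} -
      kleinPr pU pV pW {(0, 1), (1, 1)} {(0, 0), (0, 1)} := by
  simp (config := { decide := true }) only [kleinPr, Finset.sum_filter, Fintype.sum_prod_type, Fin.sum_univ_two,
    sum_zmod2, Prod.mk.injEq, Finset.mem_insert, Finset.mem_singleton, Prod.mk_add_mk]
  norm_num
  ring
end
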